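/- Let D be a finite directed acyclic multigraph and let P be the line digraph order of D (elements are arcs of D, with arc x below arc y iff there is a directed path in D whose first arc is x and last arc is y, x ≠ y). Then for every linear extension L of the transitive-closure order on the vertices of D and every choice, for each vertex v, of a permutation of the out-arcs of v, the word obtained by concatenating these permutations in the order given by L is a linear extension of P. -/

import Mathlib

/-- One vertex of a directed multigraph can reach another in one step. -/
def vStep {V E : Type*} (src dst : E → V) (u v : V) : Prop :=
  ∃ e : E, src e = u ∧ dst e = v

/-- The line-digraph order on arcs: `x < y` iff some directed path has
first arc `x` and last arc `y` (consecutive arcs share a vertex). -/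
def lineLT {V E : Type*} (src dst : E → V) (x y : E) : Prop :=
  Relation.TransGen (fun a b => dst a = src b) x y

/-- for a finite dag `D` (vertices `V`, arcs `E`), any linear
extension `L` of the transitive closure of `D` on vertices, and any choice of
orderings `ord` of the out-arcs of each vertex (injective on each out-arc set),
the concatenated word — i.e. the lexicographic relation comparing first the
`L`-position of the source and then `ord` — is a linear extension of the
line-digraph order of `D`. -/
theorem stmt0 {V E : Type*} [Fintype V] [Fintype E]
    (src dst : E → V)
    (hacyc : ∀ v : V, ¬ Relation.TransGen (vStep src dst) v v)
    (L : V ≃ Fin (Fintype.card V))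
    (hL : ∀ u v : V, Relation.TransGen (vStep src dst) u v → L u < L v)
    (ord : E → ℕ)
    (hord : ∀ e f : E, src e = src f → e ≠ f → ord e ≠ ord f) :
    IsStrictTotalOrder E
      (fun e f => L (src e) < L (src f) ∨ (src e = src f ∧ ord e < ord f)) ∧
    ∀ x y : E, lineLT src dst x y →
      (L (src x) < L (src y) ∨ (src x = src y ∧ ord x < ord y)) := by
  have key : ∀ x y : E, lineLT src dst x y →
      Relation.TransGen (vStep src dst) (src x) (src y) := by
    intro x y h
    induction h with
    | single h => exact .single ⟨x, rfl, h⟩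
    | tail h step ih => exact ih.tail ⟨_, rfl, step⟩
  refine ⟨{ trichotomous := ?_, irrefl := ?_, trans := ?_ }, ?_⟩
  · intro e f
    suffices H : (L (src e) < L (src f) ∨ (src e = src f ∧ ord e < ord f)) ∨ e = f ∨
        (L (src f) < L (src e) ∨ (src f = src e ∧ ord f < ord e)) by
      intro h1 h2
      rcases H with H | H | H
      · exact absurd H h1
      · exact H
      · exact absurd H h2
    rcases lt_trichotomy (L (src e)) (L (src f)) with h | h | h
    · exact Or.inl (Or.inl h)
    · have hs : src e = src f := L.injective h
      by_cases hef : e = f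
      · exact Or.inr (Or.inl hef)
      · rcases lt_or_gt_of_ne (hord e f hs hef) with h' | h'
        · exact Or.inl (Or.inr ⟨hs, h'⟩)
        · exact Or.inr (Or.inr (Or.inr ⟨hs.symm, h'⟩))
    · exact Or.inr (Or.inr (Or.inl h))
  · intro e h
    rcases h with h | ⟨_, h⟩
    · exact lt_irrefl _ h
    · exact lt_irrefl _ h
  · intro a b c hab hbc
    rcases hab with h1 | ⟨h1, h1'⟩ <;> rcases hbc with h2 | ⟨h2, h2'⟩
    · exact Or.inl (h1.trans h2)
    · exact Or.inl (h2 ▸ h1)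
    · exact Or.inl (h1 ▸ h2)
    · exact Or.inr ⟨h1.trans h2, h1'.trans h2'⟩
  · intro x y h
    exact Or.inl (hL _ _ (key x y h))
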